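/- Let n be even, m > 1, k = 2^{m−1}, and let f : 𝔽₂ⁿ → ℤ_{2^m} be a self-dual bent generalized Boolean function with coefficient functions a₀,…,a_{k−1}. Then for every index i ∈ {0,…,k−1} and every u ∈ 𝔽₂ⁿ, Σ_{x∈𝔽₂ⁿ} (−1)^{u·x} aᵢ(x) = 2^{n/2} aᵢ(u); that is, each aᵢ, viewed as a vector of length 2ⁿ, is an eigenvector of the Sylvester Hadamard matrix Hₙ associated with the eigenvalue 2^{n/2}. -/

import Mathlib

open Finset Matrix

/-- Dot product on 𝔽₂ⁿ. -/
def dotp {n : ℕ} (u x : Fin n → ZMod 2) : ZMod 2 := ∑ j, u j * x j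

/-- The character (−1)^{u·x}. -/
def chi {n : ℕ} (u x : Fin n → ZMod 2) : ℤ := (-1) ^ (dotp u x).val

/-- Walsh–Hadamard transform of a Boolean function. -/
def Wbf {n : ℕ} (g : (Fin n → ZMod 2) → ZMod 2) (u : Fin n → ZMod 2) : ℤ :=
  ∑ x : Fin n → ZMod 2, chi u x * (-1) ^ (g x).val

/-- A Boolean function in an even number `n` of variables is bent. -/
def IsBentBF {n : ℕ} (g : (Fin n → ZMod 2) → ZMod 2) : Prop :=
  ∀ u, Wbf g u = 2 ^ (n / 2) ∨ Wbf g u = -(2 ^ (n / 2))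

/-- `ghat` is the dual of the bent Boolean function `g`. -/
def IsDualBF {n : ℕ} (g ghat : (Fin n → ZMod 2) → ZMod 2) : Prop :=
  ∀ u, Wbf g u = 2 ^ (n / 2) * (-1) ^ (ghat u).val

/-- Walsh–Hadamard transform of a generalized Boolean function. -/
noncomputable def Wgbf {n m : ℕ} (ω : ℂ) (f : (Fin n → ZMod 2) → ZMod (2 ^ m)) (u : Fin n → ZMod 2) : ℂ :=
  ∑ x : Fin n → ZMod 2, (chi u x : ℂ) * ω ^ (f x).val

/-- A generalized Boolean function is bent. -/
def IsGBent {n m : ℕ} (ω : ℂ) (f : (Fin n → ZMod 2) → ZMod (2 ^ m)) : Prop :=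
  ∀ u, ‖Wgbf ω f u‖ = Real.sqrt 2 ^ n

/-- A generalized Boolean function is regular bent. -/
def IsRegularGBent {n m : ℕ} (ω : ℂ) (f : (Fin n → ZMod 2) → ZMod (2 ^ m)) : Prop :=
  IsGBent ω f ∧ ∃ fhat : (Fin n → ZMod 2) → ZMod (2 ^ m),
    ∀ u, Wgbf ω f u = (Real.sqrt 2 : ℂ) ^ n * ω ^ (fhat u).val

/-- The Sylvester Hadamard matrix of order 2^s. -/
def sylvester (s : ℕ) : Matrix (Fin (2 ^ s)) (Fin (2 ^ s)) ℤ :=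
  Matrix.of fun i j => (-1) ^ ∑ t ∈ Finset.range s, ((i.val >>> t) % 2) * ((j.val >>> t) % 2)

/-- The Hadamard property for a system of 2^s ±1-valued functions. -/
def HadamardProperty {n : ℕ} (s : ℕ) (G : Fin (2 ^ s) → (Fin n → ZMod 2) → ℤ) : Prop :=
  ∀ x, ∃ ε : ℤ, (ε = 1 ∨ ε = -1) ∧ ∃ c : Fin (2 ^ s),
    (sylvester s).mulVec (fun i => G i x) = fun i => ε * sylvester s i c

/-- A generalized Boolean function is self-dual bent. -/
def IsSelfDualGBent {n m : ℕ} (ω : ℂ) (f : (Fin n → ZMod 2) → ZMod (2 ^ m)) : Prop :=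
  ∀ u, Wgbf ω f u = (Real.sqrt 2 : ℂ) ^ n * ω ^ (f u).val


lemma sqrt_two_pow_even {n : ℕ} (hn : Even n) :
    (Real.sqrt 2 : ℂ) ^ n = (2 : ℂ) ^ (n / 2) := by
  obtain ⟨t, ht⟩ := hn
  subst ht
  have h2 : ((t + t) / 2) = t := by omega
  rw [h2, ← two_mul, pow_mul]
  norm_num [← Complex.ofReal_pow, Real.sq_sqrt]

lemma powers_lin_indep {m : ℕ} (hm : 0 < m) (ω : ℂ) (hω : IsPrimitiveRoot ω (2 ^ m))
    (c : Fin (2 ^ (m - 1)) → ℤ)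
    (h : ∑ i : Fin (2 ^ (m - 1)), (c i : ℂ) * ω ^ (i : ℕ) = 0) :
    ∀ i, c i = 0 := by
  have hk : 2 ^ (m - 1) = Nat.totient (2 ^ m) := by
    rw [Nat.totient_prime_pow Nat.prime_two hm]
    norm_num
  let p : Polynomial ℚ := ∑ i : Fin (2 ^ (m - 1)), Polynomial.C ((c i : ℚ)) * Polynomial.X ^ (i : ℕ)
  have hdeg_min : (minpoly ℚ ω).degree = ((2 ^ (m - 1) : ℕ) : WithBot ℕ) := by
    rw [← Polynomial.cyclotomic_eq_minpoly_rat hω (by positivity),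
        Polynomial.degree_cyclotomic, ← hk]
  have hcoeff : ∀ i : Fin (2 ^ (m - 1)), p.coeff i = (c i : ℚ) := by
    intro i
    rw [show p = ∑ i : Fin (2 ^ (m - 1)), Polynomial.C ((c i : ℚ)) * Polynomial.X ^ (i : ℕ) from rfl,
      Polynomial.finset_sum_coeff, Finset.sum_eq_single i]
    · simp
    · intro j _ hj
      rw [Polynomial.coeff_C_mul, Polynomial.coeff_X_pow]
      have h2 : (j : ℕ) ≠ (i : ℕ) := fun hh => hj (Fin.ext hh)
      simp [h2, Ne.symm h2]
    · simp
  have hpz : p = 0 := by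
    by_contra hne
    have haev : Polynomial.aeval ω p = 0 := by
      rw [show p = ∑ i : Fin (2 ^ (m - 1)), Polynomial.C ((c i : ℚ)) * Polynomial.X ^ (i : ℕ) from rfl]
      rw [map_sum]
      rw [← h]
      refine Finset.sum_congr rfl fun j _ => ?_
      rw [_root_.map_mul, Polynomial.aeval_C, Polynomial.aeval_X_pow, map_intCast]
    have hle := minpoly.degree_le_of_ne_zero ℚ ω hne haev
    have hlt : p.degree < ((2 ^ (m - 1) : ℕ) : WithBot ℕ) := by
      rw [Polynomial.degree_lt_iff_coeff_zero]
      intro j hj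
      rw [show p = ∑ i : Fin (2 ^ (m - 1)), Polynomial.C ((c i : ℚ)) * Polynomial.X ^ (i : ℕ) from rfl,
        Polynomial.finset_sum_coeff]
      apply Finset.sum_eq_zero
      intro i _
      rw [Polynomial.coeff_C_mul, Polynomial.coeff_X_pow]
      have h2 : (i : ℕ) ≠ j := by have := i.isLt; omega
      simp [h2, Ne.symm h2]
    rw [hdeg_min] at hle
    exact absurd (lt_of_le_of_lt hle hlt) (lt_irrefl _)
  intro i
  have h3 := hcoeff i
  rw [hpz] at h3
  simpa using h3.symm

/-- each coefficient function of a self-dual bent gBF is an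
eigenvector of the Sylvester Hadamard matrix Hₙ (with entries (−1)^{u·x})
for the eigenvalue 2^{n/2}. -/
theorem coefficient_eigenvector_of_selfdual_gbent {n m : ℕ} (hn : Even n) (hm : 1 < m)
    (ω : ℂ) (hω : IsPrimitiveRoot ω (2 ^ m))
    (f : (Fin n → ZMod 2) → ZMod (2 ^ m)) (hf : IsSelfDualGBent ω f)
    (a : Fin (2 ^ (m - 1)) → (Fin n → ZMod 2) → ℤ)
    (ha : ∀ x, ω ^ (f x).val = ∑ i : Fin (2 ^ (m - 1)), (a i x : ℂ) * ω ^ (i : ℕ)) :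
    ∀ (i : Fin (2 ^ (m - 1))) (u : Fin n → ZMod 2),
      ∑ x : Fin n → ZMod 2, chi u x * a i x = 2 ^ (n / 2) * a i u := by
  have expand : ∀ v, Wgbf ω f v =
      ∑ j : Fin (2 ^ (m - 1)), ((∑ x : Fin n → ZMod 2, chi v x * a j x : ℤ) : ℂ) * ω ^ (j : ℕ) := by
    intro v
    unfold Wgbf
    simp_rw [ha, Finset.mul_sum]
    rw [Finset.sum_comm]
    refine Finset.sum_congr rfl fun j _ => ?_
    push_cast
    rw [Finset.sum_mul]
    refine Finset.sum_congr rfl fun x _ => ?_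
    ring
  intro i u
  have rhs : (Real.sqrt 2 : ℂ) ^ n * ω ^ (f u).val =
      ∑ j : Fin (2 ^ (m - 1)), ((2 ^ (n / 2) * a j u : ℤ) : ℂ) * ω ^ (j : ℕ) := by
    rw [ha, sqrt_two_pow_even hn, Finset.mul_sum]
    refine Finset.sum_congr rfl fun j _ => ?_
    push_cast
    ring
  have key : ∑ j : Fin (2 ^ (m - 1)),
      (((∑ x : Fin n → ZMod 2, chi u x * a j x) - 2 ^ (n / 2) * a j u : ℤ) : ℂ) * ω ^ (j : ℕ) = 0 := by
    have h1 := hf u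
    rw [expand u, rhs] at h1
    rw [← sub_eq_zero] at h1
    rw [← h1, ← Finset.sum_sub_distrib]
    refine Finset.sum_congr rfl fun j _ => ?_
    push_cast
    ring
  have hz := powers_lin_indep (by omega) ω hω _ key i
  omega
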